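/- For even n ≥ 4, the joint rank-2^{n-1} numerical range Λ_{2^{n-1}}(X_n, Y_n, Z_n) is empty. -/

import Mathlib

open Matrix Finset Complex

noncomputable def sigmaX : Matrix (Fin 2) (Fin 2) ℂ := !![0, 1; 1, 0]
noncomputable def sigmaY : Matrix (Fin 2) (Fin 2) ℂ := !![0, -Complex.I; Complex.I, 0]
noncomputable def sigmaZ : Matrix (Fin 2) (Fin 2) ℂ := !![1, 0; 0, -1]

/-- `n`-fold Kronecker (tensor) power of a `2 × 2` matrix, acting on `ℂ^{2^n}`
indexed by bit strings. -/
noncomputable def tpow (A : Matrix (Fin 2) (Fin 2) ℂ) (n : ℕ) :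
    Matrix (Fin n → Fin 2) (Fin n → Fin 2) ℂ :=
  Matrix.of fun j k => ∏ i, A (j i) (k i)

/-- The joint rank-`k` numerical range of three matrices: triples `(a₁,a₂,a₃)` such that
`P Aⱼ P = aⱼ P` for some rank-`k` orthogonal projection `P`. -/
def jointRank3 {ι : Type*} [Fintype ι] [DecidableEq ι] (k : ℕ)
    (A B C : Matrix ι ι ℂ) : Set (ℂ × ℂ × ℂ) :=
  {t | ∃ P : Matrix ι ι ℂ, P.IsHermitian ∧ P * P = P ∧ P.rank = k ∧
    P * A * P = t.1 • P ∧ P * B * P = t.2.1 • P ∧ P * C * P = t.2.2 • P}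

lemma tpow_mul (A B : Matrix (Fin 2) (Fin 2) ℂ) (n : ℕ) :
    tpow A n * tpow B n = tpow (A * B) n := by
  ext j k
  simp only [tpow, Matrix.mul_apply, Matrix.of_apply]
  rw [Finset.prod_univ_sum, Fintype.piFinset_univ]
  exact Finset.sum_congr rfl fun m _ => (Finset.prod_mul_distrib).symm

lemma tpow_smul (c : ℂ) (A : Matrix (Fin 2) (Fin 2) ℂ) (n : ℕ) :
    tpow (c • A) n = c ^ n • tpow A n := by
  ext j k
  simp [tpow, Finset.prod_mul_distrib]

lemma tpow_one (n : ℕ) : tpow (1 : Matrix (Fin 2) (Fin 2) ℂ) n = 1 := by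
  ext j k
  by_cases h : j = k
  · subst h; simp [tpow, Matrix.one_apply]
  · obtain ⟨i, hi⟩ := Function.ne_iff.mp h
    rw [Matrix.one_apply_ne h]
    exact Finset.prod_eq_zero (Finset.mem_univ i) (Matrix.one_apply_ne hi)

lemma tpow_trace (A : Matrix (Fin 2) (Fin 2) ℂ) (n : ℕ) :
    (tpow A n).trace = A.trace ^ n := by
  have : A.trace ^ n = ∏ _i : Fin n, A.trace := by simp
  rw [this]
  simp only [Matrix.trace, Matrix.diag, tpow, Matrix.of_apply]
  rw [Finset.prod_univ_sum, Fintype.piFinset_univ]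

lemma sXY : sigmaX * sigmaY = Complex.I • sigmaZ := by
  ext i j; fin_cases i <;> fin_cases j <;>
    simp [sigmaX, sigmaY, sigmaZ, Matrix.mul_apply, Fin.sum_univ_two]
lemma sYX : sigmaY * sigmaX = (-Complex.I) • sigmaZ := by
  ext i j; fin_cases i <;> fin_cases j <;>
    simp [sigmaX, sigmaY, sigmaZ, Matrix.mul_apply, Fin.sum_univ_two]
lemma sYZ : sigmaY * sigmaZ = Complex.I • sigmaX := by
  ext i j; fin_cases i <;> fin_cases j <;>
    simp [sigmaX, sigmaY, sigmaZ, Matrix.mul_apply, Fin.sum_univ_two]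
lemma sZY : sigmaZ * sigmaY = (-Complex.I) • sigmaX := by
  ext i j; fin_cases i <;> fin_cases j <;>
    simp [sigmaX, sigmaY, sigmaZ, Matrix.mul_apply, Fin.sum_univ_two]
lemma sZX : sigmaZ * sigmaX = Complex.I • sigmaY := by
  ext i j; fin_cases i <;> fin_cases j <;>
    simp [sigmaX, sigmaY, sigmaZ, Matrix.mul_apply, Fin.sum_univ_two]
lemma sXZ : sigmaX * sigmaZ = (-Complex.I) • sigmaY := by
  ext i j; fin_cases i <;> fin_cases j <;>
    simp [sigmaX, sigmaY, sigmaZ, Matrix.mul_apply, Fin.sum_univ_two]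
lemma sXX : sigmaX * sigmaX = 1 := by
  ext i j; fin_cases i <;> fin_cases j <;>
    simp [sigmaX, Matrix.mul_apply, Fin.sum_univ_two, Matrix.one_apply]
lemma sYY : sigmaY * sigmaY = 1 := by
  ext i j; fin_cases i <;> fin_cases j <;>
    simp [sigmaY, Matrix.mul_apply, Fin.sum_univ_two, Matrix.one_apply]
lemma sZZ : sigmaZ * sigmaZ = 1 := by
  ext i j; fin_cases i <;> fin_cases j <;>
    simp [sigmaZ, Matrix.mul_apply, Fin.sum_univ_two, Matrix.one_apply]
lemma trX : sigmaX.trace = 0 := by simp [sigmaX, Matrix.trace, Fin.sum_univ_two]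
lemma trY : sigmaY.trace = 0 := by simp [sigmaY, Matrix.trace, Fin.sum_univ_two]
lemma trZ : sigmaZ.trace = 0 := by simp [sigmaZ, Matrix.trace, Fin.sum_univ_two]

lemma rank_eq_trace_of_idem {m : Type*} [Fintype m] [DecidableEq m] {E : Matrix m m ℂ}
    (h : E * E = E) : (E.rank : ℂ) = E.trace := by
  have hf : E.mulVecLin ∘ₗ E.mulVecLin = E.mulVecLin := by
    rw [← Matrix.mulVecLin_mul, h]
  obtain ⟨p, hp⟩ := (LinearMap.isProj_iff_isIdempotentElem _).mpr hf
  have hrange : LinearMap.range E.mulVecLin = p := by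
    apply le_antisymm
    · rintro x ⟨y, rfl⟩; exact hp.map_mem y
    · intro x hx; exact ⟨x, hp.map_id x hx⟩
  have htr := hp.trace
  rw [Matrix.rank, hrange, ← htr, LinearMap.trace_eq_matrix_trace ℂ (Pi.basisFun ℂ m),
    LinearMap.toMatrix_eq_toMatrix', ← Matrix.toLin'_apply', LinearMap.toMatrix'_toLin']

theorem jointRank3_empty_even (n : ℕ) (hn : 4 ≤ n) (heven : Even n) :
    jointRank3 (2 ^ (n - 1)) (tpow sigmaX n) (tpow sigmaY n) (tpow sigmaZ n) = ∅ := by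
  rw [Set.eq_empty_iff_forall_notMem]
  rintro ⟨a, b, c⟩ ⟨P, -, hPP, hrank, hA, hB, hC⟩
  dsimp only at hA hB hC
  set X := tpow sigmaX n with hX
  set Y := tpow sigmaY n with hY
  set Z := tpow sigmaZ n with hZ
  set ε : ℂ := Complex.I ^ n with hεdef
  have hn0 : n ≠ 0 := by omega
  have hε2 : ε * ε = 1 := by
    rw [hεdef, ← pow_add, ← two_mul, pow_mul, Complex.I_sq, heven.neg_one_pow]
  have hXY : X * Y = ε • Z := by
    rw [hX, hY, hZ, tpow_mul, sXY, tpow_smul]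
  have hYX : Y * X = ε • Z := by
    rw [hX, hY, hZ, tpow_mul, sYX, tpow_smul, heven.neg_pow]
  have hYZ : Y * Z = ε • X := by
    rw [hX, hY, hZ, tpow_mul, sYZ, tpow_smul]
  have hZY : Z * Y = ε • X := by
    rw [hX, hY, hZ, tpow_mul, sZY, tpow_smul, heven.neg_pow]
  have hZX : Z * X = ε • Y := by
    rw [hX, hY, hZ, tpow_mul, sZX, tpow_smul]
  have hXZ : X * Z = ε • Y := by
    rw [hX, hY, hZ, tpow_mul, sXZ, tpow_smul, heven.neg_pow]
  have hXX : X * X = 1 := by rw [hX, tpow_mul, sXX, tpow_one]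
  have hYY : Y * Y = 1 := by rw [hY, tpow_mul, sYY, tpow_one]
  have hZZ : Z * Z = 1 := by rw [hZ, tpow_mul, sZZ, tpow_one]
  have htrX : X.trace = 0 := by rw [hX, tpow_trace, trX, zero_pow hn0]
  have htrY : Y.trace = 0 := by rw [hY, tpow_trace, trY, zero_pow hn0]
  have htrZ : Z.trace = 0 := by rw [hZ, tpow_trace, trZ, zero_pow hn0]
  have htr1 : (1 : Matrix (Fin n → Fin 2) (Fin n → Fin 2) ℂ).trace = (2 : ℂ) ^ n := by
    have hcard : Fintype.card (Fin n → Fin 2) = 2 ^ n := by simp [Fintype.card_fun]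
    rw [Matrix.trace_one, hcard]
    push_cast
    ring
  have key : ∀ s1 s2 s3 : ℂ, s1 * s1 = 1 → s2 * s2 = 1 → s3 * s3 = 1 →
      s1 * s2 * s3 = ε → s1 * a + s2 * b + s3 * c = -1 := by
    intro s1 s2 s3 h1 h2 h3 hs
    have hs12 : s1 * s2 * ε = s3 := by
      linear_combination (-(s1*s2))*hs + (s3*s1*s1)*h2 + s3*h1
    have hs23 : s2 * s3 * ε = s1 := by
      linear_combination (-(s2*s3))*hs + (s1*s2*s2)*h3 + s1*h2
    have hs31 : s3 * s1 * ε = s2 := by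
      linear_combination (-(s3*s1))*hs + (s2*s3*s3)*h1 + s2*h3
    set M : Matrix (Fin n → Fin 2) (Fin n → Fin 2) ℂ := s1 • X + s2 • Y + s3 • Z with hM
    have hM2 : M * M = (3 : ℂ) • (1 : Matrix (Fin n → Fin 2) (Fin n → Fin 2) ℂ) + (2 : ℂ) • M := by
      rw [hM]
      simp only [Matrix.add_mul, Matrix.mul_add, Matrix.smul_mul, Matrix.mul_smul,
        hXY, hYX, hYZ, hZY, hZX, hXZ, hXX, hYY, hZZ, smul_add]
      match_scalars <;>
        first
          | linear_combination h1 + h2 + h3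
          | linear_combination 2*hs12
          | linear_combination 2*hs23
          | linear_combination 2*hs31
    set E : Matrix (Fin n → Fin 2) (Fin n → Fin 2) ℂ := (4 : ℂ)⁻¹ • (M + 1) with hE
    have hEE : E * E = E := by
      rw [hE]
      simp only [Matrix.smul_mul, Matrix.mul_smul, Matrix.add_mul, Matrix.mul_add,
        Matrix.mul_one, Matrix.one_mul, hM2]
      match_scalars <;> ring
    have htrM : M.trace = 0 := by
      rw [hM]
      simp [htrX, htrY, htrZ]
    have htrE : E.trace = (2 : ℂ) ^ (n - 2) := by
      rw [hE, Matrix.trace_smul, Matrix.trace_add, htrM, htr1]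
      have h2n : (2 : ℂ) ^ n = 2 ^ (n - 2) * 4 := by
        have : n - 2 + 2 = n := by omega
        rw [← this, pow_add]; norm_num
      rw [h2n]; simp; ring
    have hErank : E.rank = 2 ^ (n - 2) := by
      have h := rank_eq_trace_of_idem hEE
      rw [htrE] at h
      exact_mod_cast h
    set μ : ℂ := s1 * a + s2 * b + s3 * c with hμ
    have hPMP : P * M * P = μ • P := by
      rw [hM, hμ]
      simp only [Matrix.add_mul, Matrix.mul_add, Matrix.smul_mul, Matrix.mul_smul,
        hA, hB, hC]
      match_scalars; ring
    have hPEP : P * E * P = ((μ + 1) / 4) • P := by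
      rw [hE]
      simp only [Matrix.smul_mul, Matrix.mul_smul, Matrix.add_mul, Matrix.mul_add,
        Matrix.mul_one, Matrix.one_mul, hPMP, hPP]
      match_scalars; ring
    by_contra hne
    have hμ1 : μ + 1 ≠ 0 := fun h => hne (by linear_combination h)
    have hγ : (μ + 1) / 4 ≠ 0 := div_ne_zero hμ1 (by norm_num)
    set γ : ℂ := (μ + 1) / 4 with hγdef
    have hPeq : P = P * (γ⁻¹ • E) * P := by
      rw [Matrix.mul_smul, Matrix.smul_mul, hPEP, smul_smul, inv_mul_cancel₀ hγ, one_smul]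
    have hsm : γ⁻¹ • E = (γ⁻¹ • (1 : Matrix (Fin n → Fin 2) (Fin n → Fin 2) ℂ)) * E := by
      rw [Matrix.smul_mul, Matrix.one_mul]
    have hrankle : P.rank ≤ E.rank := by
      calc P.rank = (P * ((γ⁻¹ • E) * P)).rank := by rw [← Matrix.mul_assoc, ← hPeq]
        _ ≤ ((γ⁻¹ • E) * P).rank := Matrix.rank_mul_le_right _ _
        _ ≤ (γ⁻¹ • E).rank := Matrix.rank_mul_le_left _ _
        _ = ((γ⁻¹ • (1 : Matrix (Fin n → Fin 2) (Fin n → Fin 2) ℂ)) * E).rank := by rw [hsm]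
        _ ≤ E.rank := Matrix.rank_mul_le_right _ _
    rw [hrank, hErank] at hrankle
    have : (2 : ℕ) ^ (n - 2) < 2 ^ (n - 1) := by
      apply Nat.pow_lt_pow_right (by norm_num) (by omega)
    omega
  have hεε : ε * ε * ε = ε := by rw [hε2, one_mul]
  have k1 := key ε ε ε hε2 hε2 hε2 hεε
  have k2 := key ε (-ε) (-ε) hε2 (by linear_combination hε2) (by linear_combination hε2)
    (by linear_combination hεε)
  have k3 := key (-ε) ε (-ε) (by linear_combination hε2) hε2 (by linear_combination hε2)
    (by linear_combination hεε)
  have k4 := key (-ε) (-ε) ε (by linear_combination hε2) (by linear_combination hε2) hε2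
    (by linear_combination hεε)
  have : (0 : ℂ) = -4 := by linear_combination k1 + k2 + k3 + k4
  norm_num at this
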